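/- Let F : ℝⁿ → ℝ be a smooth convex function with bounded Hessian entries, let gᵢ : ℝ → ℝ be convex, and define E(u) = F(u) + Σᵢ gᵢ(uᵢ). Suppose E is strictly convex in each coordinate separately. Then u* ∈ ℝⁿ is a global minimizer of E if and only if for every i, u*ᵢ minimizes the one-dimensional function t ↦ E(u*₁,…,u*_{i-1}, t, u*_{i+1},…,u*ₙ). -/

import Mathlib

open Filter Set Topology

lemma slope_lim_le (ψ : ℝ → ℝ) (d c : ℝ) (hd : HasDerivAt ψ d 0)
    (hb : ∀ s ∈ Set.Ioc (0:ℝ) 1, (ψ s - ψ 0) / s ≤ c) : d ≤ c := by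
  have h1 : Tendsto (slope ψ 0) (𝓝[>] 0) (𝓝 d) :=
    (hasDerivAt_iff_tendsto_slope.mp hd).mono_left
      (nhdsWithin_mono _ (fun x hx => ne_of_gt hx))
  refine le_of_tendsto h1 ?_
  filter_upwards [Ioc_mem_nhdsGT_of_mem (by constructor <;> norm_num : (0:ℝ) ∈ Set.Ico (0:ℝ) 1)]
    with s hs
  have := hb s hs
  rwa [slope_def_field, sub_zero]

lemma slope_lim_ge (ψ : ℝ → ℝ) (d c : ℝ) (hd : HasDerivAt ψ d 0)
    (hb : ∀ s ∈ Set.Ioc (0:ℝ) 1, c ≤ (ψ s - ψ 0) / s) : c ≤ d := by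
  have h1 : Tendsto (slope ψ 0) (𝓝[>] 0) (𝓝 d) :=
    (hasDerivAt_iff_tendsto_slope.mp hd).mono_left
      (nhdsWithin_mono _ (fun x hx => ne_of_gt hx))
  refine ge_of_tendsto h1 ?_
  filter_upwards [Ioc_mem_nhdsGT_of_mem (by constructor <;> norm_num : (0:ℝ) ∈ Set.Ico (0:ℝ) 1)]
    with s hs
  have := hb s hs
  rwa [slope_def_field, sub_zero]

lemma hasDerivAt_line {n : ℕ} (F : (Fin n → ℝ) → ℝ) (hF : Differentiable ℝ F)
    (u c : Fin n → ℝ) :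
    HasDerivAt (fun s : ℝ => F (u + s • c)) (fderiv ℝ F u c) 0 := by
  have hg : HasDerivAt (fun s : ℝ => u + s • c) c 0 := by
    simpa using (((hasDerivAt_id (0:ℝ)).smul_const c).const_add u)
  have hf : HasFDerivAt F (fderiv ℝ F u) ((fun s : ℝ => u + s • c) 0) := by
    simpa using (hF u).hasFDerivAt
  exact hf.comp_hasDerivAt 0 hg



/-- Coordinate-wise optimality characterization (Osher–Li): for
`E(u) = F(u) + Σᵢ gᵢ(uᵢ)` with `F` smooth convex, `gᵢ` convex, and `E` strictly
convex in each coordinate, `u*` is a global minimizer of `E` iff each coordinate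
`u*ᵢ` minimizes `E` along its own coordinate direction. -/
theorem stmt9 (n : ℕ) (F : (Fin n → ℝ) → ℝ) (g : Fin n → ℝ → ℝ)
    (hF : Differentiable ℝ F) (hFc : ConvexOn ℝ Set.univ F)
    (hg : ∀ i, ConvexOn ℝ Set.univ (g i))
    (E : (Fin n → ℝ) → ℝ) (hE : ∀ u, E u = F u + ∑ i, g i (u i))
    (hstrict : ∀ (x : Fin n → ℝ) (i : Fin n),
      StrictConvexOn ℝ Set.univ (fun t : ℝ => E (Function.update x i t)))
    (u : Fin n → ℝ) :
    (∀ v, E u ≤ E v) ↔ ∀ i, ∀ t : ℝ, E u ≤ E (Function.update u i t) := by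
  constructor
  · intro h i t; exact h _
  · intro hcoord v
    set D : Fin n → ℝ := fun i => fderiv ℝ F u (Pi.single i 1) with hD
    -- the coordinate update as a point on a line
    have hupd : ∀ (i : Fin n) (a : ℝ), u + a • (Pi.single i 1 : Fin n → ℝ) = Function.update u i (u i + a) := by
      intro i a
      funext j
      by_cases h : j = i
      · subst h; simp
      · simp [Function.update_of_ne h, Pi.single_apply, h]
    -- expansion of the g-sum under an update
    have hsum : ∀ (i : Fin n) (c : ℝ), ∑ j, g j (Function.update u i c j)
        = g i c + ∑ j ∈ Finset.univ.erase i, g j (u j) := by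
      intro i c
      rw [← Finset.add_sum_erase _ (fun j => g j (Function.update u i c j)) (Finset.mem_univ i)]
      congr 1
      · simp
      · exact Finset.sum_congr rfl fun j hj => by
          rw [Function.update_of_ne (Finset.ne_of_mem_erase hj)]
    -- key coordinate inequality from coordinatewise minimality
    have hFg : ∀ (i : Fin n) (c : ℝ), F u + g i (u i) ≤ F (Function.update u i c) + g i c := by
      intro i c
      have h := hcoord i c
      rw [hE, hE] at h
      have h1 := hsum i c
      have h2 := hsum i (u i)
      rw [Function.update_eq_self] at h2
      rw [h1, h2] at h
      linarith
    -- subgradient inequality for g i at u i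
    have gineq : ∀ (i : Fin n) (t : ℝ), g i (u i) - (t - u i) * D i ≤ g i t := by
      intro i t
      set h : ℝ := t - u i with hh
      have hder : HasDerivAt (fun s : ℝ => F (u + s • (h • (Pi.single i 1 : Fin n → ℝ))))
          (fderiv ℝ F u (h • (Pi.single i 1 : Fin n → ℝ))) 0 := hasDerivAt_line F hF u _
      have hval : fderiv ℝ F u (h • (Pi.single i 1 : Fin n → ℝ)) = h * D i := by
        rw [map_smul]; simp [hD]
      rw [hval] at hder
      have key : g i (u i) - g i t ≤ h * D i := by
        apply slope_lim_ge _ _ _ hder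
        intro s hs
        obtain ⟨hs0, hs1⟩ := hs
        rw [le_div_iff₀ hs0]
        have e1 : u + s • (h • (Pi.single i 1 : Fin n → ℝ)) = Function.update u i (u i + s * h) := by
          rw [smul_smul]; exact hupd i (s * h)
        have e0 : u + (0:ℝ) • (h • (Pi.single i 1 : Fin n → ℝ)) = u := by simp
        have hconv : g i (u i + s * h) ≤ (1 - s) * g i (u i) + s * g i t := by
          have := (hg i).2 (Set.mem_univ (u i)) (Set.mem_univ t)
            (by linarith : (0:ℝ) ≤ 1 - s) (le_of_lt hs0) (by ring)
          have harg : (1 - s) • u i + s • t = u i + s * h := by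
            simp [smul_eq_mul, hh]; ring
          rwa [harg] at this
        have hmin := hFg i (u i + s * h)
        rw [e1, e0]
        nlinarith
      linarith
    -- gradient inequality for F at u
    have Fineq : fderiv ℝ F u (v - u) ≤ F v - F u := by
      have hder : HasDerivAt (fun s : ℝ => F (u + s • (v - u)))
          (fderiv ℝ F u (v - u)) 0 := hasDerivAt_line F hF u _
      apply slope_lim_le _ _ _ hder
      intro s hs
      obtain ⟨hs0, hs1⟩ := hs
      rw [div_le_iff₀ hs0]
      have e1 : u + s • (v - u) = (1 - s) • u + s • v := by
        funext j; simp [smul_eq_mul]; ring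
      have e0 : u + (0:ℝ) • (v - u) = u := by simp
      have hconv := hFc.2 (Set.mem_univ u) (Set.mem_univ v)
        (by linarith : (0:ℝ) ≤ 1 - s) (le_of_lt hs0) (by ring)
      simp only [smul_eq_mul] at hconv
      rw [e1, e0]
      calc F ((1 - s) • u + s • v) - F u ≤ (1 - s) * F u + s * F v - F u := by linarith
        _ = (F v - F u) * s := by ring
    -- linearity of the derivative over coordinates
    have hlin : fderiv ℝ F u (v - u) = ∑ i, (v i - u i) * D i := by
      have hdecomp : (v - u : Fin n → ℝ) = ∑ i, (v i - u i) • (Pi.single i 1 : Fin n → ℝ) := by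
        have : ∀ i, (v i - u i) • (Pi.single i 1 : Fin n → ℝ) = Pi.single i (v i - u i) := by
          intro i; rw [← Pi.single_smul, smul_eq_mul, mul_one]
        rw [Finset.sum_congr rfl fun i _ => this i, Finset.univ_sum_single]
        rfl
      rw [hdecomp, map_sum]
      exact Finset.sum_congr rfl fun i _ => by rw [map_smul]; simp [hD]
    -- assemble
    have hgv : ∑ i, (g i (u i) - (v i - u i) * D i) ≤ ∑ i, g i (v i) :=
      Finset.sum_le_sum fun i _ => gineq i (v i)
    rw [hE u, hE v]
    rw [Finset.sum_sub_distrib] at hgv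
    rw [hlin] at Fineq
    linarith
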